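/- For all integers m and n, with y = 3(n^2-2m^2)(n^2+2mn+2m^2)(n^2+4mn+2m^2), b = 4(n^2+2mn+2m^2)^3, d1 = (n^2+4mn+2m^2)(5n^4+16mn^3+28m^2n^2+32m^3n+20m^4), and d2 = (n^2-2m^2)(5n^4+24mn^3+52m^2n^2+48m^3n+20m^4), the identity 2y^2 + 2b^2 = d1^2 + d2^2 holds. -/
import Mathlib


theorem stmt_5 (m n y b d1 d2 : ℤ)
    (hy : y = 3*(n^2-2*m^2)*(n^2+2*m*n+2*m^2)*(n^2+4*m*n+2*m^2))
    (hb : b = 4*(n^2+2*m*n+2*m^2)^3)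
    (hd1 : d1 = (n^2+4*m*n+2*m^2)*(5*n^4+16*m*n^3+28*m^2*n^2+32*m^3*n+20*m^4))
    (hd2 : d2 = (n^2-2*m^2)*(5*n^4+24*m*n^3+52*m^2*n^2+48*m^3*n+20*m^4)) :
    2*y^2 + 2*b^2 = d1^2 + d2^2 := by subst hy hb hd1 hd2; ring
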